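/- Let s satisfy s''(t) = 6 t - 6 s(t)^2 on [0, ∞) with s(0) = s'(0) = 0 and s(t) > 0 for all t > 0. Then s(t) < √(3 t) for all t > 0. -/

import Mathlib

open Set

theorem painleve_sqrt_upper_bound
    (s : ℝ → ℝ)
    (hdiff : ∀ t ∈ Ici (0 : ℝ), DifferentiableAt ℝ s t ∧ DifferentiableAt ℝ (deriv s) t)
    (heq : ∀ t ∈ Ici (0 : ℝ), deriv (deriv s) t = 6 * t - 6 * (s t) ^ 2)
    (h0 : s 0 = 0) (h0' : deriv s 0 = 0)
    (hpos : ∀ t : ℝ, 0 < t → 0 < s t) :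
    ∀ t : ℝ, 0 < t → s t < Real.sqrt (3 * t) := by
  set F : ℝ → ℝ := fun t => 12 * t * s t - (deriv s t) ^ 2 - 4 * (s t) ^ 3 with hF
  have hFd : ∀ t ∈ Ici (0:ℝ), HasDerivAt F (12 * s t) t := by
    intro t ht
    have h1 : HasDerivAt s (deriv s t) t := (hdiff t ht).1.hasDerivAt
    have h2 : HasDerivAt (deriv s) (6 * t - 6 * (s t) ^ 2) t := by
      have := (hdiff t ht).2.hasDerivAt
      rwa [heq t ht] at this
    have hA : HasDerivAt (fun u => 12 * u * s u) (12 * s t + 12 * t * deriv s t) t := by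
      have := ((hasDerivAt_id t).const_mul (12:ℝ)).mul h1
      simp only [id_eq] at this
      exact this.congr_deriv (by ring)
    have hB : HasDerivAt (fun u => (deriv s u) ^ 2)
        ((2:ℕ) * (deriv s t) ^ 1 * (6 * t - 6 * (s t) ^ 2)) t := h2.pow 2
    have hC : HasDerivAt (fun u => 4 * (s u) ^ 3)
        (4 * ((3:ℕ) * (s t) ^ 2 * deriv s t)) t := (h1.pow 3).const_mul 4
    have := (hA.sub hB).sub hC
    exact this.congr_deriv (by push_cast; ring)
  have hmono : StrictMonoOn F (Ici (0:ℝ)) := by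
    apply strictMonoOn_of_deriv_pos (convex_Ici 0)
    · intro t ht
      exact ((hFd t ht).differentiableAt.continuousAt).continuousWithinAt
    · intro t ht
      rw [interior_Ici] at ht
      rw [(hFd t (mem_Ici.mpr (le_of_lt ht))).deriv]
      have := hpos t ht
      linarith
  intro t ht
  have hkey : F 0 < F t := hmono (by simp) (le_of_lt ht) ht
  have hF0 : F 0 = 0 := by simp [hF, h0, h0']
  rw [hF0] at hkey
  simp only [hF] at hkey
  have hs := hpos t ht
  have h3t : (s t) ^ 2 < 3 * t := by nlinarith [sq_nonneg (deriv s t)]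
  exact (Real.lt_sqrt hs.le).mpr h3t
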